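/- arXiv:2311.07927 — 3 statements merged into one kernel-verified Lean document; each statement's English description precedes it below -/
import Mathlib

section
/- If F satisfies assumption (A), then every minimizer of Ψ_F is a strict weakly l-efficient solution: arg min(Ψ_F) ⊆ l-SWEff(F). -/
open Pointwise

/-- The Gerstewitz scalarization function `ψ^q_P(y) = sup {t : ℝ | y ∈ t • q + P}`. -/
noncomputable def psi {Y : Type*} [AddCommGroup Y] [Module ℝ Y] (P : Set Y) (q : Y) (y : Y) : ℝ :=
  sSup {t : ℝ | y - t • q ∈ P}

/-- The scalarization of the set-valued map `F`: `Ψ_F(x) = inf_{z ∈ F(x)} ψ^q_P(z)`. -/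
noncomputable def PsiF {X Y : Type*} [AddCommGroup Y] [Module ℝ Y]
    (P : Set Y) (q : Y) (F : X → Set Y) (x : X) : EReal :=
  ⨅ z ∈ F x, ((psi P q z : ℝ) : EReal)

/-- Assumption (A): `ψ^q_P` attains its infimum on `F(x)` for all `x`. -/
def AssumptionA {X Y : Type*} [AddCommGroup Y] [Module ℝ Y]
    (P : Set Y) (q : Y) (F : X → Set Y) : Prop :=
  ∀ x : X, ∃ z ∈ F x, ∀ w ∈ F x, psi P q z ≤ psi P q w

/-- `x̄` is a strict weakly `l`-efficient solution of (SOP): there is no `x ≠ x̄`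
with `F(x̄) ⊆ F(x) + int P`. -/
def SWEff {X Y : Type*} [AddCommGroup Y] [Module ℝ Y] [TopologicalSpace Y]
    (P : Set Y) (F : X → Set Y) (xbar : X) : Prop :=
  ¬ ∃ x : X, x ≠ xbar ∧ F xbar ⊆ F x + interior P

section Aux

variable {Y : Type*} [AddCommGroup Y] [Module ℝ Y] [TopologicalSpace Y]
  [IsTopologicalAddGroup Y] [ContinuousSMul ℝ Y]

/-- Perturbing an interior point slightly in any direction stays in the interior. -/
lemma near {P : Set Y} {y : Y} (hy : y ∈ interior P) (v : Y) :
    ∃ s : ℝ, 0 < s ∧ y + s • v ∈ interior P := by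
  have htend : Filter.Tendsto (fun s : ℝ => y + s • v) (nhds 0) (nhds y) := by
    have h1 : Filter.Tendsto (fun s : ℝ => s • v) (nhds (0:ℝ)) (nhds ((0:ℝ) • v)) :=
      Filter.Tendsto.smul_const Filter.tendsto_id v
    simpa using tendsto_const_nhds.add h1
  have h2 := htend.eventually (isOpen_interior.mem_nhds hy)
  rw [Metric.eventually_nhds_iff] at h2
  obtain ⟨ε, hε, hε2⟩ := h2
  refine ⟨ε/2, by positivity, hε2 ?_⟩
  rw [Real.dist_eq, sub_zero, abs_of_pos (by positivity)]
  linarith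

lemma addP {P : Set Y} (hPconv : Convex ℝ P)
    (hPcone : ∀ c : ℝ, 0 < c → ∀ y ∈ P, c • y ∈ P) {a b : Y}
    (ha : a ∈ P) (hb : b ∈ P) : a + b ∈ P := by
  have h := hPconv ha hb (by norm_num : (0:ℝ) ≤ 1/2) (by norm_num : (0:ℝ) ≤ 1/2) (by norm_num)
  have h2 := hPcone 2 (by norm_num) _ h
  have : (2:ℝ) • ((1/2:ℝ) • a + (1/2:ℝ) • b) = a + b := by
    rw [smul_add, smul_smul, smul_smul]; norm_num
  rwa [this] at h2

lemma negq_not_mem {P : Set Y} (hPcone : ∀ c : ℝ, 0 < c → ∀ y ∈ P, c • y ∈ P)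
    (hPconv : Convex ℝ P) (hPuniv : P ≠ Set.univ) {q : Y} (hq : q ∈ interior P) :
    -q ∉ P := by
  intro hnq
  apply hPuniv
  ext y
  simp only [Set.mem_univ, iff_true]
  obtain ⟨s, hs, hsy⟩ := near hq y
  have h1 : (q + s • y) + -q ∈ P := addP hPconv hPcone (interior_subset hsy) hnq
  have h2 : (q + s • y) + -q = s • y := by abel
  rw [h2] at h1
  have := hPcone s⁻¹ (by positivity) _ h1
  rwa [inv_smul_smul₀ hs.ne'] at this

/-- The set defining `psi` is nonempty. -/
lemma psi_nonempty {P : Set Y} (hPcone : ∀ c : ℝ, 0 < c → ∀ y ∈ P, c • y ∈ P)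
    {q : Y} (hq : q ∈ interior P) (y : Y) :
    {t : ℝ | y - t • q ∈ P}.Nonempty := by
  obtain ⟨s, hs, hsy⟩ := near hq y
  have h1 : s⁻¹ • (q + s • y) ∈ P := hPcone s⁻¹ (by positivity) _ (interior_subset hsy)
  refine ⟨-s⁻¹, ?_⟩
  have : y - (-s⁻¹) • q = s⁻¹ • (q + s • y) := by
    rw [smul_add, inv_smul_smul₀ hs.ne', neg_smul, sub_neg_eq_add, add_comm]
  rwa [Set.mem_setOf_eq, this]

/-- The set defining `psi` is bounded above. -/
lemma psi_bddAbove {P : Set Y} (hPclosed : IsClosed P) (hPconv : Convex ℝ P)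
    (hPcone : ∀ c : ℝ, 0 < c → ∀ y ∈ P, c • y ∈ P) (hPuniv : P ≠ Set.univ)
    {q : Y} (hq : q ∈ interior P) (y : Y) :
    BddAbove {t : ℝ | y - t • q ∈ P} := by
  by_contra hbdd
  rw [not_bddAbove_iff] at hbdd
  have hchoice : ∀ n : ℕ, ∃ t : ℝ, t ∈ {t : ℝ | y - t • q ∈ P} ∧ (n:ℝ) < t := by
    intro n
    obtain ⟨t, ht, h⟩ := hbdd (n:ℝ)
    exact ⟨t, ht, h⟩
  choose t ht htlt using hchoice
  have htpos : ∀ n, 0 < t n := fun n => lt_of_le_of_lt (Nat.cast_nonneg n) (htlt n)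
  have htop : Filter.Tendsto t Filter.atTop Filter.atTop :=
    Filter.tendsto_atTop_mono (fun n => (htlt n).le) tendsto_natCast_atTop_atTop
  have hinv : Filter.Tendsto (fun n => (t n)⁻¹) Filter.atTop (nhds 0) :=
    Filter.Tendsto.inv_tendsto_atTop htop
  have hlim : Filter.Tendsto (fun n => (t n)⁻¹ • y - q) Filter.atTop (nhds (-q)) := by
    have h1 : Filter.Tendsto (fun n => (t n)⁻¹ • y) Filter.atTop (nhds ((0:ℝ) • y)) :=
      hinv.smul_const y
    have h2 := h1.sub (tendsto_const_nhds (x := q))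
    simpa using h2
  have hmem : ∀ n, (t n)⁻¹ • y - q ∈ P := by
    intro n
    have h := hPcone (t n)⁻¹ (inv_pos.mpr (htpos n)) _ (ht n)
    rwa [smul_sub, smul_smul, inv_mul_cancel₀ (htpos n).ne', one_smul] at h
  have : -q ∈ P := hPclosed.mem_of_tendsto hlim (Filter.Eventually.of_forall hmem)
  exact negq_not_mem hPcone hPconv hPuniv hq this

/-- Key shift inequality: if `p - ε • q ∈ P` then `psi (w + p) ≥ psi w + ε`. -/
lemma psi_shift {P : Set Y} (hPclosed : IsClosed P) (hPconv : Convex ℝ P)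
    (hPcone : ∀ c : ℝ, 0 < c → ∀ y ∈ P, c • y ∈ P) (hPuniv : P ≠ Set.univ)
    {q : Y} (hq : q ∈ interior P) (w p : Y) (ε : ℝ) (hp : p - ε • q ∈ P) :
    psi P q w + ε ≤ psi P q (w + p) := by
  have hbdd := psi_bddAbove hPclosed hPconv hPcone hPuniv hq (w + p)
  have hne := psi_nonempty hPcone hq w
  rw [psi, ← sub_nonneg]
  rw [psi]
  have key : ∀ s ∈ {t : ℝ | w - t • q ∈ P}, s ≤ sSup {t : ℝ | w + p - t • q ∈ P} - ε := by
    intro s hs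
    have hmem : w + p - (s + ε) • q ∈ P := by
      have := addP hPconv hPcone hs hp
      have heq : w - s • q + (p - ε • q) = w + p - (s + ε) • q := by
        rw [add_smul]; abel
      rwa [heq] at this
    have := le_csSup hbdd hmem
    linarith
  have := csSup_le hne key
  linarith

end Aux

/-- If `F` satisfies assumption (A), then `arg min Ψ_F ⊆ l-SWEff(F)`. -/
theorem stmt8 {X Y : Type*} [TopologicalSpace X] [T2Space X]
    [AddCommGroup Y] [Module ℝ Y] [TopologicalSpace Y]
    [IsTopologicalAddGroup Y] [ContinuousSMul ℝ Y] [T2Space Y]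
    (P : Set Y) (hPclosed : IsClosed P) (hPconv : Convex ℝ P)
    (hP0 : (0 : Y) ∈ P) (hPcone : ∀ c : ℝ, 0 < c → ∀ y ∈ P, c • y ∈ P)
    (hPne : P ≠ {0}) (hPuniv : P ≠ Set.univ)
    (q : Y) (hq : q ∈ interior P)
    (F : X → Set Y) (hF : ∀ x, (F x).Nonempty)
    (hA : AssumptionA P q F) :
    {x : X | PsiF P q F x = ⨅ x' : X, PsiF P q F x'} ⊆ {x : X | SWEff P F x} := by
  intro xbar hxbar
  simp only [Set.mem_setOf_eq] at hxbar ⊢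
  rintro ⟨x, hxne, hsub⟩
  -- z̄ attains the inf on F xbar
  obtain ⟨zbar, hzbar, hzmin⟩ := hA xbar
  -- decompose z̄ = w + r, w ∈ F x, r ∈ int P
  obtain ⟨w, hw, r, hr, hwr⟩ := hsub hzbar
  -- find ε > 0 with r - ε q ∈ P
  obtain ⟨ε, hε, hεmem⟩ : ∃ ε : ℝ, 0 < ε ∧ r - ε • q ∈ P := by
    obtain ⟨s, hs, hsy⟩ := near hr (-q)
    exact ⟨s, hs, by simpa [smul_neg, sub_eq_add_neg] using interior_subset hsy⟩
  -- PsiF xbar = psi z̄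
  have hPsi_xbar : PsiF P q F xbar = ((psi P q zbar : ℝ) : EReal) := by
    apply le_antisymm
    · exact iInf₂_le zbar hzbar
    · exact le_iInf₂ fun z hz => EReal.coe_le_coe_iff.mpr (hzmin z hz)
  -- PsiF x ≤ psi w
  have hPsi_x : PsiF P q F x ≤ ((psi P q w : ℝ) : EReal) := iInf₂_le w hw
  -- minimality
  have hmin : PsiF P q F xbar ≤ PsiF P q F x := hxbar ▸ iInf_le _ x
  have hle : psi P q zbar ≤ psi P q w := by
    have := hmin.trans hPsi_x
    rw [hPsi_xbar] at this
    exact_mod_cast this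
  have hgt : psi P q w + ε ≤ psi P q zbar := by
    have := psi_shift hPclosed hPconv hPcone hPuniv hq w r ε hεmem
    rwa [show w + r = zbar from hwr] at this
  linarith
end

section
/- F is q-srgi if and only if Ψ_F is regular-global-inf (rgi) on X, where Ψ_F is rgi at x₀ means: if Ψ_F(x₀) > inf_{x ∈ X} Ψ_F(x), then there exist a neighborhood U of x₀ and a real c > inf_{x ∈ X} Ψ_F(x) such that Ψ_F(x) > c for all x ∈ U (all inequalities in the extended reals). -/
open Pointwise

/-- The colevel set of `F` at height `λ • q`:
`Colev_{<ˡ}(F, λq) = {x ∈ X : F(x) ⊄ λ • q + int P}`. -/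
def Colev {X Y : Type*} [AddCommGroup Y] [Module ℝ Y] [TopologicalSpace Y]
    (P : Set Y) (q : Y) (F : X → Set Y) (lam : ℝ) : Set X :=
  {x | ¬ F x ⊆ {y : Y | y - lam • q ∈ interior P}}

/-- `M_F^q = sup {t ∈ ℝ : F(X) ⊆ t • q + P} ∈ ℝ ∪ {±∞}` (with `sup ∅ = -∞`). -/
noncomputable def Mq {X Y : Type*} [AddCommGroup Y] [Module ℝ Y]
    (P : Set Y) (q : Y) (F : X → Set Y) : EReal :=
  sSup ((fun t : ℝ => (t : EReal)) '' {t : ℝ | ∀ x : X, ∀ z ∈ F x, z - t • q ∈ P})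

/-- `F` is `q`-srgi: if `λ > M_F^q` and `x₀ ∉ Colev_{<ˡ}(F, λq)`, then there exist a
neighborhood `U` of `x₀` and a real `r > M_F^q` with `U ∩ Colev_{<ˡ}(F, rq) = ∅`. -/
def Srgi {X Y : Type*} [TopologicalSpace X] [AddCommGroup Y] [Module ℝ Y] [TopologicalSpace Y]
    (P : Set Y) (q : Y) (F : X → Set Y) : Prop :=
  ∀ lam : ℝ, Mq P q F < (lam : EReal) → ∀ x₀ : X, x₀ ∉ Colev P q F lam →
    ∃ U ∈ nhds x₀, ∃ r : ℝ, Mq P q F < (r : EReal) ∧ U ∩ Colev P q F r = ∅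

section Aux

variable {Y : Type*} [AddCommGroup Y] [Module ℝ Y] [TopologicalSpace Y]
    [IsTopologicalAddGroup Y] [ContinuousSMul ℝ Y]
    {P : Set Y} (hPclosed : IsClosed P) (hPconv : Convex ℝ P)
    (hP0 : (0 : Y) ∈ P) (hPcone : ∀ c : ℝ, 0 < c → ∀ y ∈ P, c • y ∈ P)
    (hPuniv : P ≠ Set.univ) {q : Y} (hq : q ∈ interior P)

set_option linter.unusedSectionVars false

include hPclosed hPconv hP0 hPcone hPuniv hq

theorem P_add (a b : Y) (ha : a ∈ P) (hb : b ∈ P) : a + b ∈ P := by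
  have h := hPconv ha hb (by norm_num : (0:ℝ) ≤ 1/2) (by norm_num : (0:ℝ) ≤ 1/2) (by norm_num)
  have := hPcone 2 (by norm_num) _ h
  rw [smul_add, smul_smul, smul_smul] at this
  norm_num at this
  exact this

theorem int_add (a b : Y) (ha : a ∈ interior P) (hb : b ∈ P) : a + b ∈ interior P := by
  have hopen : IsOpen (interior P + {b}) := isOpen_interior.add_right
  have hsub : interior P + {b} ⊆ P := by
    rintro y ⟨u, hu, v, hv, rfl⟩
    rcases hv with rfl
    exact P_add hPclosed hPconv hP0 hPcone hPuniv hq u _ (interior_subset hu) hb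
  have : a + b ∈ interior P + {b} := Set.add_mem_add ha rfl
  exact interior_maximal hsub hopen this

theorem int_smul (c : ℝ) (hc : 0 < c) (a : Y) (ha : a ∈ interior P) : c • a ∈ interior P := by
  have hopen : IsOpen (c • interior P) := (isOpenMap_smul₀ (ne_of_gt hc) _ isOpen_interior)
  have hsub : c • interior P ⊆ P := by
    rintro y ⟨u, hu, rfl⟩
    exact hPcone c hc u (interior_subset hu)
  exact interior_maximal hsub hopen ⟨a, ha, rfl⟩

theorem not_neg_q : -q ∉ P := by
  intro hneg
  have h0 : (0 : Y) ∈ interior P := by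
    have := int_add hPclosed hPconv hP0 hPcone hPuniv hq q (-q) hq hneg
    simpa using this
  apply hPuniv
  apply Set.eq_univ_of_forall
  intro y
  have hcont : Filter.Tendsto (fun t : ℝ => t • y) (nhds 0) (nhds (0 : Y)) := by
    have : Filter.Tendsto (fun t : ℝ => t • y) (nhds 0) (nhds ((0:ℝ) • y)) :=
      (continuous_id.smul continuous_const).tendsto 0
    simpa using this
  have hev : ∀ᶠ t : ℝ in nhds 0, t • y ∈ interior P :=
    hcont.eventually (isOpen_interior.mem_nhds h0)
  have hev' : ∀ᶠ t : ℝ in nhdsWithin 0 (Set.Ioi 0), t • y ∈ interior P ∧ t ∈ Set.Ioi 0 :=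
    ((hev.filter_mono nhdsWithin_le_nhds).and self_mem_nhdsWithin)
  obtain ⟨t, htP, htpos⟩ := hev'.exists
  have := hPcone t⁻¹ (inv_pos.2 htpos) _ (interior_subset htP)
  rwa [smul_smul, inv_mul_cancel₀ (ne_of_gt htpos), one_smul] at this

theorem S_nonempty (y : Y) : {t : ℝ | y - t • q ∈ P}.Nonempty := by
  have hcont : Filter.Tendsto (fun s : ℝ => q + s • y) (nhds 0) (nhds q) := by
    have : Filter.Tendsto (fun s : ℝ => q + s • y) (nhds 0) (nhds (q + (0:ℝ) • y)) :=
      (continuous_const.add (continuous_id.smul continuous_const)).tendsto 0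
    simpa using this
  have hev : ∀ᶠ s : ℝ in nhds 0, q + s • y ∈ interior P :=
    hcont.eventually (isOpen_interior.mem_nhds hq)
  have hev' : ∀ᶠ s : ℝ in nhdsWithin 0 (Set.Ioi 0), q + s • y ∈ interior P ∧ s ∈ Set.Ioi 0 :=
    ((hev.filter_mono nhdsWithin_le_nhds).and self_mem_nhdsWithin)
  obtain ⟨s, hsP, hspos⟩ := hev'.exists
  refine ⟨-s⁻¹, ?_⟩
  have := hPcone s⁻¹ (inv_pos.2 hspos) _ (interior_subset hsP)
  rw [smul_add, smul_smul, inv_mul_cancel₀ (ne_of_gt hspos), one_smul] at this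
  have heq : y - (-s⁻¹) • q = y + s⁻¹ • q := by
    rw [neg_smul, sub_neg_eq_add]
  rw [Set.mem_setOf_eq, heq]
  rwa [add_comm] at this

theorem S_bddAbove (y : Y) : BddAbove {t : ℝ | y - t • q ∈ P} := by
  by_contra hbd
  rw [not_bddAbove_iff] at hbd
  have hsel : ∀ n : ℕ, ∃ t : ℝ, y - t • q ∈ P ∧ (n : ℝ) < t := by
    intro n
    obtain ⟨t, ht, hlt⟩ := hbd n
    exact ⟨t, ht, hlt⟩
  choose t ht hlt using hsel
  have htop : Filter.Tendsto t Filter.atTop Filter.atTop :=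
    Filter.tendsto_atTop_mono (fun n => (hlt n).le) tendsto_natCast_atTop_atTop
  have hinv : Filter.Tendsto (fun n => (t n)⁻¹) Filter.atTop (nhds 0) :=
    htop.inv_tendsto_atTop
  have hlim : Filter.Tendsto (fun n => (t n)⁻¹ • y - q) Filter.atTop (nhds (-q)) := by
    have : Filter.Tendsto (fun n => (t n)⁻¹ • y - q) Filter.atTop (nhds ((0:ℝ) • y - q)) :=
      ((hinv.smul_const y).sub tendsto_const_nhds)
    simpa using this
  have hmem : ∀ᶠ n : ℕ in Filter.atTop, (t n)⁻¹ • y - q ∈ P := by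
    filter_upwards [Filter.eventually_ge_atTop 1] with n hn
    have htn : 0 < t n := lt_of_lt_of_le (by exact_mod_cast Nat.zero_lt_one.trans_le hn) (hlt n).le
    have := hPcone (t n)⁻¹ (inv_pos.2 htn) _ (ht n)
    rwa [smul_sub, smul_smul, inv_mul_cancel₀ (ne_of_gt htn), one_smul] at this
  exact not_neg_q hPclosed hPconv hP0 hPcone hPuniv hq (hPclosed.mem_of_tendsto hlim hmem)

/-- `t ≤ ψ y ↔ y - t • q ∈ P`. -/
theorem psi_le_iff (y : Y) (t : ℝ) : t ≤ psi P q y ↔ y - t • q ∈ P := by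
  constructor
  · intro hle
    have hmem : psi P q y ∈ {t : ℝ | y - t • q ∈ P} := by
      have hcl : IsClosed {t : ℝ | y - t • q ∈ P} :=
        hPclosed.preimage (continuous_const.sub (continuous_id.smul continuous_const))
      exact hcl.csSup_mem (S_nonempty hPclosed hPconv hP0 hPcone hPuniv hq y) (S_bddAbove hPclosed hPconv hP0 hPcone hPuniv hq y)
    rcases eq_or_lt_of_le hle with rfl | hlt
    · exact hmem
    · have hpos : (0:ℝ) < psi P q y - t := sub_pos.2 hlt
      have hqmem : (psi P q y - t) • q ∈ P := hPcone _ hpos q (interior_subset hq)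
      have := P_add hPclosed hPconv hP0 hPcone hPuniv hq _ _ hmem hqmem
      have heq : y - psi P q y • q + (psi P q y - t) • q = y - t • q := by
        rw [sub_smul]; abel
      rwa [heq] at this
  · intro hmem
    exact le_csSup (S_bddAbove hPclosed hPconv hP0 hPcone hPuniv hq y) hmem

/-- `t < ψ y ↔ y - t • q ∈ interior P`. -/
theorem psi_lt_iff (y : Y) (t : ℝ) : t < psi P q y ↔ y - t • q ∈ interior P := by
  constructor
  · intro hlt
    have hmem : y - psi P q y • q ∈ P := (psi_le_iff hPclosed hPconv hP0 hPcone hPuniv hq y _).1 le_rfl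
    have hqmem : (psi P q y - t) • q ∈ interior P := int_smul hPclosed hPconv hP0 hPcone hPuniv hq _ (sub_pos.2 hlt) q hq
    have := int_add hPclosed hPconv hP0 hPcone hPuniv hq _ _ hqmem hmem
    have heq : (psi P q y - t) • q + (y - psi P q y • q) = y - t • q := by
      rw [sub_smul]; abel
    rwa [heq] at this
  · intro hmem
    have hcont : Filter.Tendsto (fun s : ℝ => y - s • q) (nhds t) (nhds (y - t • q)) :=
      (continuous_const.sub (continuous_id.smul continuous_const)).tendsto t
    have hev : ∀ᶠ s : ℝ in nhds t, y - s • q ∈ interior P :=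
      hcont.eventually (isOpen_interior.mem_nhds hmem)
    have hev' : ∀ᶠ s : ℝ in nhdsWithin t (Set.Ioi t), y - s • q ∈ interior P ∧ s ∈ Set.Ioi t :=
      ((hev.filter_mono nhdsWithin_le_nhds).and self_mem_nhdsWithin)
    obtain ⟨s, hsP, hst⟩ := hev'.exists
    calc t < s := hst
    _ ≤ psi P q y := (psi_le_iff hPclosed hPconv hP0 hPcone hPuniv hq y s).2 (interior_subset hsP)

end Aux


/-- `F` is `q`-srgi iff `Ψ_F` is regular-global-inf (rgi) on `X`. -/
theorem stmt12 {X Y : Type*} [TopologicalSpace X] [T2Space X]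
    [AddCommGroup Y] [Module ℝ Y] [TopologicalSpace Y]
    [IsTopologicalAddGroup Y] [ContinuousSMul ℝ Y] [T2Space Y]
    (P : Set Y) (hPclosed : IsClosed P) (hPconv : Convex ℝ P)
    (hP0 : (0 : Y) ∈ P) (hPcone : ∀ c : ℝ, 0 < c → ∀ y ∈ P, c • y ∈ P)
    (hPne : P ≠ {0}) (hPuniv : P ≠ Set.univ)
    (q : Y) (hq : q ∈ interior P)
    (F : X → Set Y) (hF : ∀ x, (F x).Nonempty) :
    Srgi P q F ↔
      ∀ x₀ : X, (⨅ x : X, PsiF P q F x) < PsiF P q F x₀ →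
        ∃ U ∈ nhds x₀, ∃ c : ℝ, (⨅ x : X, PsiF P q F x) < (c : EReal) ∧
          ∀ x ∈ U, (c : EReal) < PsiF P q F x := by
  have hle_iff := psi_le_iff hPclosed hPconv hP0 hPcone hPuniv hq
  have hlt_iff := psi_lt_iff hPclosed hPconv hP0 hPcone hPuniv hq
  set m : EReal := ⨅ x : X, PsiF P q F x with hm
  -- Ψ_F x ≥ t iff all members satisfy the cone condition
  have hPsi_ge : ∀ (x : X) (t : ℝ), (t : EReal) ≤ PsiF P q F x ↔ ∀ z ∈ F x, z - t • q ∈ P := by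
    intro x t
    rw [PsiF, le_iInf₂_iff]
    constructor
    · intro h z hz
      exact (hle_iff z t).1 (by exact_mod_cast h z hz)
    · intro h z hz
      exact_mod_cast (hle_iff z t).2 (h z hz)
  have hPsi_le : ∀ (x : X) (z : Y), z ∈ F x → PsiF P q F x ≤ ((psi P q z : ℝ) : EReal) := by
    intro x z hz
    exact iInf₂_le z hz
  -- Mq = m
  have hMq : Mq P q F = m := by
    have hset : {t : ℝ | ∀ x : X, ∀ z ∈ F x, z - t • q ∈ P} = {t : ℝ | (t : EReal) ≤ m} := by
      ext t
      simp only [Set.mem_setOf_eq, hm, le_iInf_iff]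
      exact ⟨fun h x => (hPsi_ge x t).2 (h x), fun h x => (hPsi_ge x t).1 (h x)⟩
    rw [Mq, hset]
    apply le_antisymm
    · exact sSup_le (by rintro e ⟨t, ht, rfl⟩; exact ht)
    · rcases eq_or_ne m ⊥ with hbot | hne
      · simp [hbot]
      rcases eq_or_ne m ⊤ with htop | hne'
      · rw [htop, top_le_iff, sSup_eq_top]
        intro b hb
        obtain ⟨r, hbr, hrt⟩ := EReal.exists_between_coe_real hb
        exact ⟨(r : EReal), ⟨r, by simp [htop], rfl⟩, hbr⟩
      · lift m to ℝ using ⟨hne', hne⟩ with mr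
        exact le_sSup ⟨mr, show (mr:EReal) ≤ (mr:EReal) from le_rfl, rfl⟩
  -- Ψ x < ⊤
  have hPsi_lt_top : ∀ x : X, PsiF P q F x < ⊤ := by
    intro x
    obtain ⟨z, hz⟩ := hF x
    exact lt_of_le_of_lt (hPsi_le x z hz) (by exact_mod_cast lt_top_iff_ne_top.2 (EReal.coe_ne_top _))
  -- not in Colev iff all z in interior
  have hColev : ∀ (x : X) (lam : ℝ), x ∉ Colev P q F lam ↔ ∀ z ∈ F x, z - lam • q ∈ interior P := by
    intro x lam
    rw [Colev, Set.mem_setOf_eq, not_not]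
    rfl
  constructor
  · -- srgi → rgi
    intro hsrgi x₀ hx₀
    obtain ⟨lam, hmlam, hlam⟩ := EReal.exists_between_coe_real hx₀
    have hx₀notin : x₀ ∉ Colev P q F lam := by
      rw [hColev]
      intro z hz
      rw [← hlt_iff]
      have : (lam : EReal) < ((psi P q z : ℝ) : EReal) := lt_of_lt_of_le hlam (hPsi_le x₀ z hz)
      exact_mod_cast this
    obtain ⟨U, hU, r, hmr, hUr⟩ := hsrgi lam (by rw [hMq]; exact hmlam) x₀ hx₀notin
    rw [hMq] at hmr
    obtain ⟨c, hmc, hcr⟩ := EReal.exists_between_coe_real hmr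
    refine ⟨U, hU, c, hmc, ?_⟩
    intro x hx
    have hxnot : x ∉ Colev P q F r := fun hmem => Set.eq_empty_iff_forall_notMem.1 hUr x ⟨hx, hmem⟩
    rw [hColev] at hxnot
    have : (r : EReal) ≤ PsiF P q F x :=
      (hPsi_ge x r).2 fun z hz => interior_subset (hxnot z hz)
    exact lt_of_lt_of_le hcr this
  · -- rgi → srgi
    intro hrgi lam hmlam x₀ hx₀
    rw [hMq] at hmlam
    rw [hColev] at hx₀
    have hge : (lam : EReal) ≤ PsiF P q F x₀ :=
      (hPsi_ge x₀ lam).2 fun z hz => interior_subset (hx₀ z hz)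
    obtain ⟨U, hU, c, hmc, hc⟩ := hrgi x₀ (lt_of_lt_of_le hmlam hge)
    refine ⟨U, hU, c, by rw [hMq]; exact hmc, ?_⟩
    apply Set.eq_empty_iff_forall_notMem.2
    rintro x ⟨hxU, hxC⟩
    rw [Colev, Set.mem_setOf_eq] at hxC
    apply hxC
    intro z hz
    rw [Set.mem_setOf_eq, ← hlt_iff]
    have : (c : EReal) < ((psi P q z : ℝ) : EReal) := lt_of_lt_of_le (hc x hxU) (hPsi_le x z hz)
    exact_mod_cast this
end

section
/- Suppose (E, σ) is first countable and F : K ⇉ Y satisfies assumption (A). Then F^{G,∞}_σ(u) > F^{G,∞}_σ(0) for all u ∈ K^∞_σ \ {0} if and only if for every real sequence (λ_n) with λ_n > M_F^q for all n and λ_n ↓ M_F^q, the σ-horizon outer limit satisfies limsup_n^{σ,∞} Colev_{<^l}(F, λ_n q) = {0}. -/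
open Filter Pointwise

/-- The `σ`-asymptotic cone of `A`. -/
def asympCone {E : Type*} [AddCommGroup E] [Module ℝ E]
    (σ : TopologicalSpace E) (A : Set E) : Set E :=
  {d | ∃ t : ℕ → ℝ, ∃ x : ℕ → E, Tendsto t atTop atTop ∧ (∀ k, x k ∈ A) ∧
    Tendsto (fun k => (t k)⁻¹ • x k) atTop (@nhds E σ d)}

/-- The `σ`-horizon outer limit of a sequence of sets. -/
def horizonLimsup {E : Type*} [AddCommGroup E] [Module ℝ E]
    (σ : TopologicalSpace E) (A : ℕ → Set E) : Set E :=
  {u | ∃ φ : ℕ → ℕ, StrictMono φ ∧ ∃ x : ℕ → E, ∃ t : ℕ → ℝ,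
    (∀ j, x j ∈ A (φ j)) ∧ Tendsto t atTop atTop ∧
    Tendsto (fun j => (t j)⁻¹ • x j) atTop (@nhds E σ u)}

/-- The colevel set of `F : K ⇉ Y` (a subset of `K`). -/
def ColevOn {E Y : Type*} [AddCommGroup Y] [Module ℝ Y] [TopologicalSpace Y]
    (P : Set Y) (q : Y) (K : Set E) (F : E → Set Y) (lam : ℝ) : Set E :=
  {x ∈ K | ¬ F x ⊆ {y : Y | y - lam • q ∈ interior P}}

/-- `M_F^q = sup {t ∈ ℝ : F(K) ⊆ t • q + P}` for `F : K ⇉ Y`. -/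
noncomputable def MqOn {E Y : Type*} [AddCommGroup Y] [Module ℝ Y]
    (P : Set Y) (q : Y) (K : Set E) (F : E → Set Y) : EReal :=
  sSup ((fun t : ℝ => (t : EReal)) '' {t : ℝ | ∀ x ∈ K, ∀ z ∈ F x, z - t • q ∈ P})

/-- The `qx-σ`-asymptotic function of `F : K ⇉ Y`. -/
noncomputable def FGasymp {E Y : Type*} [AddCommGroup E] [Module ℝ E]
    [AddCommGroup Y] [Module ℝ Y] [TopologicalSpace Y]
    (σ : TopologicalSpace E) (P : Set Y) (q : Y) (K : Set E) (F : E → Set Y) (u : E) : EReal :=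
  sInf ((fun lam : ℝ => (lam : EReal)) '' {lam : ℝ | u ∈ asympCone σ (ColevOn P q K F lam)})


section Paux
variable {Y : Type*} [AddCommGroup Y] [Module ℝ Y]
  {P : Set Y}

lemma myP_add (hPconv : Convex ℝ P) (hPcone : ∀ c : ℝ, 0 < c → ∀ y ∈ P, c • y ∈ P)
    {a b : Y} (ha : a ∈ P) (hb : b ∈ P) : a + b ∈ P := by
  have h1 := hPconv ha hb (by norm_num : (0:ℝ) ≤ 1/2) (by norm_num : (0:ℝ) ≤ 1/2) (by norm_num)
  have h2 := hPcone 2 (by norm_num) _ h1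
  have : (2:ℝ) • ((1/2:ℝ) • a + (1/2:ℝ) • b) = a + b := by
    rw [smul_add, smul_smul, smul_smul]; norm_num
  rwa [this] at h2

variable [TopologicalSpace Y]

lemma myP_add_interior [IsTopologicalAddGroup Y]
    (hPconv : Convex ℝ P) (hPcone : ∀ c : ℝ, 0 < c → ∀ y ∈ P, c • y ∈ P)
    {a b : Y} (ha : a ∈ P) (hb : b ∈ interior P) : a + b ∈ interior P := by
  have hsub : (fun y => a + y) '' interior P ⊆ P := by
    rintro _ ⟨y, hy, rfl⟩
    exact myP_add hPconv hPcone ha (interior_subset hy)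
  have hopen : IsOpen ((fun y => a + y) '' interior P) :=
    (Homeomorph.addLeft a).isOpenMap _ isOpen_interior
  exact interior_maximal hsub hopen ⟨b, hb, rfl⟩

lemma myP_smul_interior [ContinuousSMul ℝ Y]
    (hPcone : ∀ c : ℝ, 0 < c → ∀ y ∈ P, c • y ∈ P)
    {c : ℝ} (hc : 0 < c) {b : Y} (hb : b ∈ interior P) : c • b ∈ interior P := by
  have hsub : (fun y : Y => c • y) '' interior P ⊆ P := by
    rintro _ ⟨y, hy, rfl⟩
    exact hPcone c hc _ (interior_subset hy)
  have hopen : IsOpen ((fun y : Y => c • y) '' interior P) :=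
    isOpenMap_smul₀ hc.ne' _ isOpen_interior
  exact interior_maximal hsub hopen ⟨b, hb, rfl⟩
end Paux

section Paux2
variable {Y : Type*} [AddCommGroup Y] [Module ℝ Y] [TopologicalSpace Y]
  [IsTopologicalAddGroup Y] [ContinuousSMul ℝ Y] {P : Set Y} {q : Y}

lemma my_inv_nat_tendsto : Tendsto (fun n : ℕ => ((n:ℝ)+1)⁻¹) atTop (nhds 0) := by
  have h : Tendsto (fun n : ℕ => (n:ℝ)+1) atTop atTop :=
    tendsto_atTop_add_const_right _ 1 tendsto_natCast_atTop_atTop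
  exact h.inv_tendsto_atTop

lemma myP_neg_q_not_mem (hPclosed : IsClosed P) (hPconv : Convex ℝ P)
    (hPcone : ∀ c : ℝ, 0 < c → ∀ y ∈ P, c • y ∈ P)
    (hPuniv : P ≠ Set.univ) (hq : q ∈ interior P) : -q ∉ P := by
  intro hneg
  have h0 : (0 : Y) ∈ interior P := by
    have := myP_add_interior hPconv hPcone hneg hq
    rwa [neg_add_cancel] at this
  apply hPuniv
  ext y
  simp only [Set.mem_univ, iff_true]
  have htend : Tendsto (fun n : ℕ => ((n:ℝ)+1)⁻¹ • y) atTop (nhds (0 : Y)) := by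
    have := my_inv_nat_tendsto.smul_const y
    rwa [zero_smul] at this
  have hev : ∀ᶠ n : ℕ in atTop, ((n:ℝ)+1)⁻¹ • y ∈ interior P :=
    htend.eventually_mem (isOpen_interior.mem_nhds h0)
  obtain ⟨n, hn⟩ := hev.exists
  have hpos : (0:ℝ) < (n:ℝ)+1 := by positivity
  have := hPcone ((n:ℝ)+1) hpos _ (interior_subset hn)
  rwa [smul_smul, mul_inv_cancel₀ hpos.ne', one_smul] at this

lemma myS_dc (hPconv : Convex ℝ P) (hPcone : ∀ c : ℝ, 0 < c → ∀ y ∈ P, c • y ∈ P)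
    (hq : q ∈ interior P) {z : Y} {t s : ℝ} (hts : t ≤ s) (h : z - s • q ∈ P) :
    z - t • q ∈ P := by
  rcases eq_or_lt_of_le hts with rfl | hlt
  · exact h
  · have hsq : (s - t) • q ∈ P := hPcone _ (sub_pos.mpr hlt) _ (interior_subset hq)
    have heq : z - t • q = (z - s • q) + (s - t) • q := by rw [sub_smul]; abel
    rw [heq]; exact myP_add hPconv hPcone h hsq

lemma myS_bddAbove (hPclosed : IsClosed P) (hPconv : Convex ℝ P)
    (hPcone : ∀ c : ℝ, 0 < c → ∀ y ∈ P, c • y ∈ P)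
    (hPuniv : P ≠ Set.univ) (hq : q ∈ interior P) (z : Y) :
    BddAbove {t : ℝ | z - t • q ∈ P} := by
  by_contra hbd
  rw [not_bddAbove_iff] at hbd
  have hall : ∀ n : ℕ, z - ((n:ℝ)+1) • q ∈ P := by
    intro n
    obtain ⟨t, ht, hlt⟩ := hbd ((n:ℝ)+1)
    exact myS_dc hPconv hPcone hq hlt.le ht
  have hmem : ∀ n : ℕ, ((n:ℝ)+1)⁻¹ • z - q ∈ P := by
    intro n
    have hpos : (0:ℝ) < (n:ℝ)+1 := by positivity
    have := hPcone ((n:ℝ)+1)⁻¹ (by positivity) _ (hall n)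
    rwa [smul_sub, smul_smul, inv_mul_cancel₀ hpos.ne', one_smul] at this
  have htend : Tendsto (fun n : ℕ => ((n:ℝ)+1)⁻¹ • z - q) atTop (nhds (-q)) := by
    have := (my_inv_nat_tendsto.smul_const z).sub_const q
    rwa [zero_smul, zero_sub] at this
  have : -q ∈ P := hPclosed.mem_of_tendsto htend (Eventually.of_forall hmem)
  exact myP_neg_q_not_mem hPclosed hPconv hPcone hPuniv hq this
end Paux2
section Eaux
variable {E : Type*} [AddCommGroup E] [Module ℝ E]

lemma my_asympCone_mono (σ : TopologicalSpace E) {A B : Set E} (h : A ⊆ B) :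
    asympCone σ A ⊆ asympCone σ B := by
  rintro d ⟨t, x, ht, hx, hc⟩
  exact ⟨t, x, ht, fun k => h (hx k), hc⟩

lemma my_zero_mem_asympCone (σ : TopologicalSpace E)
    (hSMul : @ContinuousSMul ℝ E _ _ σ) {A : Set E} (hA : A.Nonempty) :
    (0 : E) ∈ asympCone σ A := by
  letI := σ
  obtain ⟨x, hx⟩ := hA
  refine ⟨fun k => (k:ℝ)+1, fun _ => x, ?_, fun _ => hx, ?_⟩
  · exact tendsto_atTop_add_const_right _ 1 tendsto_natCast_atTop_atTop
  · have := my_inv_nat_tendsto.smul_const x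
    rwa [zero_smul] at this

lemma my_diag (σ : TopologicalSpace E) (hfc : @FirstCountableTopology E σ)
    {A : ℕ → Set E} {u : E} (h : ∀ n, u ∈ asympCone σ (A n)) :
    u ∈ horizonLimsup σ A := by
  letI := σ
  obtain ⟨U, hU⟩ := (nhds u).exists_antitone_basis
  have key : ∀ n : ℕ, ∃ y : E, ∃ s : ℝ, y ∈ A n ∧ (n : ℝ) ≤ s ∧ s⁻¹ • y ∈ U n := by
    intro n
    obtain ⟨t, x, ht, hx, hc⟩ := h n
    have h1 : ∀ᶠ k in atTop, (n : ℝ) ≤ t k := ht.eventually_ge_atTop _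
    have h2 : ∀ᶠ k in atTop, (t k)⁻¹ • x k ∈ U n :=
      hc.eventually_mem (hU.toHasBasis.mem_of_mem trivial)
    obtain ⟨k, hk1, hk2⟩ := (h1.and h2).exists
    exact ⟨x k, t k, hx k, hk1, hk2⟩
  choose y s hyA hs hyU using key
  refine ⟨id, strictMono_id, y, s, hyA, ?_, ?_⟩
  · exact tendsto_atTop_mono hs tendsto_natCast_atTop_atTop
  · refine hU.toHasBasis.tendsto_right_iff.mpr fun i _ => ?_
    filter_upwards [eventually_ge_atTop i] with n hn
    exact hU.antitone hn (hyU n)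
end Eaux
/-- If `(E, σ)` is first countable and `F` satisfies assumption (A), then the optimality
condition `F^{G,∞}_σ(u) > F^{G,∞}_σ(0)` for all `u ∈ K^∞_σ \ {0}` holds iff for every
real sequence `λ_n ↓ M_F^q` with `λ_n > M_F^q`,
`limsup_n^{σ,∞} Colev_{<ˡ}(F, λ_n q) = {0}`. -/
theorem stmt19 {E Y : Type*} [NormedAddCommGroup E] [NormedSpace ℝ E] [CompleteSpace E]
    (σ : TopologicalSpace E)
    (hcoarse : (inferInstance : TopologicalSpace E) ≤ σ)
    (hT2 : @T2Space E σ) (hAddGrp : @IsTopologicalAddGroup E σ _)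
    (hSMul : @ContinuousSMul ℝ E _ _ σ)
    (hfc : @FirstCountableTopology E σ)
    [AddCommGroup Y] [Module ℝ Y] [TopologicalSpace Y]
    [IsTopologicalAddGroup Y] [ContinuousSMul ℝ Y] [T2Space Y]
    (P : Set Y) (hPclosed : IsClosed P) (hPconv : Convex ℝ P)
    (hP0 : (0 : Y) ∈ P) (hPcone : ∀ c : ℝ, 0 < c → ∀ y ∈ P, c • y ∈ P)
    (hPne : P ≠ {0}) (hPuniv : P ≠ Set.univ)
    (q : Y) (hq : q ∈ interior P)
    (K : Set E) (hKne : K.Nonempty)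
    (F : E → Set Y) (hF : ∀ x ∈ K, (F x).Nonempty)
    (hA : ∀ x ∈ K, ∃ z ∈ F x, ∀ w ∈ F x, psi P q z ≤ psi P q w) :
    (∀ u ∈ asympCone σ K, u ≠ 0 → FGasymp σ P q K F 0 < FGasymp σ P q K F u) ↔
      (∀ lam : ℕ → ℝ, (∀ n, MqOn P q K F < ((lam n : ℝ) : EReal)) → Antitone lam →
        Tendsto (fun n => ((lam n : ℝ) : EReal)) atTop (nhds (MqOn P q K F)) →
        horizonLimsup σ (fun n => ColevOn P q K F (lam n)) = {0}) := by
  have hqP : q ∈ P := interior_subset hq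
  set M := MqOn P q K F with hMdef
  have hMeq : M = sSup ((fun t : ℝ => (t : EReal)) ''
      {t : ℝ | ∀ x ∈ K, ∀ z ∈ F x, z - t • q ∈ P}) := hMdef
  have hFGeq : ∀ v : E, FGasymp σ P q K F v = sInf ((fun lam : ℝ => (lam : EReal)) ''
      {lam : ℝ | v ∈ asympCone σ (ColevOn P q K F lam)}) := fun _ => rfl
  -- shifting level sets
  have hshift : ∀ {a b : ℝ} (z : Y), a ≤ b → z - b • q ∈ interior P → z - a • q ∈ interior P := by
    intro a b z hab hz
    have hbq : (b - a) • q ∈ P := by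
      rcases eq_or_lt_of_le hab with rfl | h
      · simpa using hP0
      · exact hPcone _ (sub_pos.mpr h) _ hqP
    have h2 : (b - a) • q + (z - b • q) ∈ interior P :=
      myP_add_interior hPconv hPcone hbq hz
    have heq : (b - a) • q + (z - b • q) = z - a • q := by rw [sub_smul]; abel
    rwa [heq] at h2
  have hmono : ∀ {a b : ℝ}, a ≤ b → ColevOn P q K F a ⊆ ColevOn P q K F b := by
    intro a b hab x hx
    exact Set.mem_sep hx.1 fun hsub => hx.2 fun z hz => hshift z hab (hsub hz)
  have hM_lt_top : M < ⊤ := by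
    obtain ⟨x₀, hx₀⟩ := hKne
    obtain ⟨z₀, hz₀⟩ := hF x₀ hx₀
    obtain ⟨B, hB⟩ := myS_bddAbove hPclosed hPconv hPcone hPuniv hq z₀
    have hle : M ≤ (B : EReal) := by
      rw [hMeq]
      refine sSup_le ?_
      rintro _ ⟨t, ht, rfl⟩
      exact EReal.coe_le_coe_iff.mpr (hB (ht x₀ hx₀ z₀ hz₀))
    exact hle.trans_lt (EReal.coe_lt_top B)
  have hColev_ne : ∀ lam : ℝ, M < (lam : EReal) → (ColevOn P q K F lam).Nonempty := by
    intro lam hlam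
    have hnotT : ¬ (∀ x ∈ K, ∀ z ∈ F x, z - lam • q ∈ P) := by
      intro hT
      have hle : (lam : EReal) ≤ M := by
        rw [hMeq]; exact le_sSup ⟨lam, hT, rfl⟩
      exact absurd hle (not_le.mpr hlam)
    push_neg at hnotT
    obtain ⟨x, hxK, z, hz, hzP⟩ := hnotT
    exact ⟨x, Set.mem_sep hxK fun hsub => hzP (interior_subset (hsub hz))⟩
  have hM_le_of_ne : ∀ lam : ℝ, (ColevOn P q K F lam).Nonempty → M ≤ (lam : EReal) := by
    intro lam hne
    obtain ⟨x, hxK, hxns⟩ := hne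
    rw [hMeq]
    refine sSup_le ?_
    rintro _ ⟨t, ht, rfl⟩
    rw [EReal.coe_le_coe_iff]
    by_contra hlt
    push_neg at hlt
    apply hxns
    intro z hz
    have hzt : z - t • q ∈ P := ht x hxK z hz
    have hq2 : (t - lam) • q ∈ interior P :=
      myP_smul_interior hPcone (sub_pos.mpr hlt) hq
    have h3 : (z - t • q) + (t - lam) • q ∈ interior P := by
      have := myP_add_interior hPconv hPcone hzt hq2
      exact this
    have heq : (z - t • q) + (t - lam) • q = z - lam • q := by rw [sub_smul]; abel
    rwa [heq] at h3
  have hFG0_le : FGasymp σ P q K F 0 ≤ M := by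
    by_contra hlt
    push_neg at hlt
    obtain ⟨c, hc1, hc2⟩ := EReal.exists_between_coe_real hlt
    have h0 : (0:E) ∈ asympCone σ (ColevOn P q K F c) :=
      my_zero_mem_asympCone σ hSMul (hColev_ne c hc1)
    have hle : FGasymp σ P q K F 0 ≤ (c : EReal) := by
      rw [hFGeq]; exact sInf_le ⟨c, h0, rfl⟩
    exact absurd hle (not_le.mpr hc2)
  have hM_le_FG0 : M ≤ FGasymp σ P q K F 0 := by
    rw [hFGeq]
    refine le_sInf ?_
    rintro _ ⟨lam, hlam, rfl⟩
    refine hM_le_of_ne lam ?_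
    obtain ⟨t, x, ht, hx, -⟩ := hlam
    exact ⟨x 0, hx 0⟩
  constructor
  · -- forward
    intro hopt lam hgt hanti hlim
    ext u
    simp only [Set.mem_singleton_iff]
    constructor
    · rintro ⟨φ, hφ, x, t, hx, ht, hc⟩
      by_contra hu0
      have huK : u ∈ asympCone σ K := ⟨t, x, ht, fun j => (hx j).1, hc⟩
      have hlt := hopt u huK hu0
      have hFGu_le : FGasymp σ P q K F u ≤ M := by
        by_contra hltM
        push_neg at hltM
        obtain ⟨c, hc1, hc2⟩ := EReal.exists_between_coe_real hltM
        have hev : ∀ᶠ n in atTop, ((lam n : ℝ) : EReal) < (c : EReal) :=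
          hlim.eventually_lt_const hc1
        obtain ⟨N, hN⟩ := hev.exists_forall_of_atTop
        have hmem : u ∈ asympCone σ (ColevOn P q K F c) := by
          refine ⟨fun j => t (j+N), fun j => x (j+N),
            ht.comp (tendsto_add_atTop_nat N), ?_, hc.comp (tendsto_add_atTop_nat N)⟩
          intro j
          have h1 : N ≤ φ (j+N) := le_trans (Nat.le_add_left N j) hφ.le_apply
          have h2 : lam (φ (j+N)) ≤ c := (EReal.coe_lt_coe_iff.mp (hN _ h1)).le
          exact hmono h2 (hx (j+N))
        have hle : FGasymp σ P q K F u ≤ (c : EReal) := by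
          rw [hFGeq]; exact sInf_le ⟨c, hmem, rfl⟩
        exact absurd hle (not_le.mpr hc2)
      exact absurd hlt (not_lt.mpr (hFGu_le.trans hM_le_FG0))
    · rintro rfl
      exact my_diag σ hfc
        (fun n => my_zero_mem_asympCone σ hSMul (hColev_ne _ (hgt n)))
  · -- backward
    intro hcond u huK hu0
    by_contra hnotlt
    push_neg at hnotlt
    have hFGu : FGasymp σ P q K F u ≤ M := hnotlt.trans hFG0_le
    have hu_mem : ∀ lam : ℝ, M < (lam : EReal) → u ∈ asympCone σ (ColevOn P q K F lam) := by
      intro lam hlam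
      have hFGu' := hFGu
      rw [hFGeq u] at hFGu'
      have hlt : sInf ((fun l : ℝ => (l : EReal)) ''
          {l : ℝ | u ∈ asympCone σ (ColevOn P q K F l)}) < (lam : EReal) :=
        lt_of_le_of_lt hFGu' hlam
      obtain ⟨b, hbmem, hblt⟩ := sInf_lt_iff.mp hlt
      obtain ⟨μ, hμ, rfl⟩ := hbmem
      exact my_asympCone_mono σ (hmono (EReal.coe_lt_coe_iff.mp hblt).le) hμ
    by_cases hbot : M = ⊥
    · have h1 : ∀ n : ℕ, M < ((-(n:ℝ) : ℝ) : EReal) := fun n => hbot ▸ EReal.bot_lt_coe _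
      have h2 : Antitone (fun n : ℕ => -(n:ℝ)) :=
        fun a b hab => neg_le_neg (Nat.cast_le.mpr hab)
      have h3 : Tendsto (fun n : ℕ => ((-(n:ℝ) : ℝ) : EReal)) atTop (nhds M) := by
        rw [hbot, EReal.tendsto_nhds_bot_iff_real]
        intro c
        filter_upwards [tendsto_natCast_atTop_atTop.eventually_gt_atTop (-c)] with n hn
        rw [EReal.coe_lt_coe_iff]
        linarith
      have heq := hcond _ h1 h2 h3
      have humem : u ∈ horizonLimsup σ (fun n => ColevOn P q K F (-(n:ℝ))) :=
        my_diag σ hfc (fun n => hu_mem _ (h1 n))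
      rw [heq] at humem
      exact hu0 humem
    · obtain ⟨m, hm⟩ : ∃ m : ℝ, M = (m : EReal) :=
        ⟨M.toReal, (EReal.coe_toReal hM_lt_top.ne hbot).symm⟩
      have h1 : ∀ n : ℕ, M < ((m + ((n:ℝ)+1)⁻¹ : ℝ) : EReal) := by
        intro n
        rw [hm, EReal.coe_lt_coe_iff]
        have : (0:ℝ) < ((n:ℝ)+1)⁻¹ := by positivity
        linarith
      have h2 : Antitone (fun n : ℕ => m + ((n:ℝ)+1)⁻¹) := by
        intro a b hab
        have hba : ((a:ℝ)+1) ≤ ((b:ℝ)+1) := by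
          have h := (Nat.cast_le (α := ℝ)).mpr hab
          linarith
        have : ((b:ℝ)+1)⁻¹ ≤ ((a:ℝ)+1)⁻¹ :=
          inv_anti₀ (by positivity) hba
        simpa using add_le_add_left this m
      have h3 : Tendsto (fun n : ℕ => ((m + ((n:ℝ)+1)⁻¹ : ℝ) : EReal)) atTop (nhds M) := by
        rw [hm]
        have hr : Tendsto (fun n : ℕ => m + ((n:ℝ)+1)⁻¹) atTop (nhds m) := by
          have := my_inv_nat_tendsto.const_add m
          simpa using this
        exact (continuous_coe_real_ereal.tendsto m).comp hr
      have heq := hcond _ h1 h2 h3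
      have humem : u ∈ horizonLimsup σ (fun n => ColevOn P q K F (m + ((n:ℝ)+1)⁻¹)) :=
        my_diag σ hfc (fun n => hu_mem _ (h1 n))
      rw [heq] at humem
      exact hu0 humem
end
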